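/- For every integer m ≥ 1 the function G_m is (2m−2)-times continuously differentiable on ℝ; on ℝ∖{0} it is infinitely differentiable and satisfies the differential equation G_m^{(2m)}(x) = G_m^{(2m−2)}(x); and its (2m−1)st derivative has a jump of size 1 at the origin: lim_{x→0+} G_m^{(2m−1)}(x) − lim_{x→0−} G_m^{(2m−1)}(x) = 1. (Thus G_m is a fundamental solution of the operator d^{2m}/dx^{2m} − d^{2m−2}/dx^{2m−2}.) -/

import Mathlib

/-- `G_m(x) = (sgn x)/2 · ((eˣ − e⁻ˣ)/2 − Σ_{k=1}^{m−1} x^{2k−1}/(2k−1)!)`, with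
`sgn 0 = 0` and the sum empty for `m = 1`, so that `G₁(x) = sgn(x)(eˣ−e⁻ˣ)/4`. -/
noncomputable def Gm (m : ℕ) (x : ℝ) : ℝ :=
  Real.sign x / 2 * ((Real.exp x - Real.exp (-x)) / 2
    - ∑ k ∈ Finset.range (m - 1), x ^ (2 * k + 1) / (Nat.factorial (2 * k + 1)))

open Real Filter Set Asymptotics

noncomputable def Tm (n k : ℕ) (x : ℝ) : ℝ :=
  if n ≤ 2*k+1 then x ^ (2*k+1-n) / (Nat.factorial (2*k+1-n)) else 0

noncomputable def Bm (m n : ℕ) (x : ℝ) : ℝ :=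
  (if Even n then Real.sinh x else Real.cosh x) - ∑ k ∈ Finset.range (m-1), Tm n k x

noncomputable def Dm (m n : ℕ) (x : ℝ) : ℝ := Real.sign x / 2 * Bm m n x

lemma Tm_hasDerivAt (n k : ℕ) (x : ℝ) : HasDerivAt (Tm n k) (Tm (n+1) k x) x := by
  unfold Tm
  rcases Nat.lt_trichotomy n (2*k+1) with h | h | h
  · have h1 : n ≤ 2*k+1 := h.le
    have h2 : n+1 ≤ 2*k+1 := h
    simp only [if_pos h1, if_pos h2]
    have e1 : 2*k+1-n = (2*k+1-(n+1)) + 1 := by omega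
    rw [e1]
    have := (hasDerivAt_pow (2*k+1-(n+1)+1) x).div_const
      ((Nat.factorial (2*k+1-(n+1)+1) : ℝ))
    refine this.congr_deriv ?_
    symm
    rw [Nat.factorial_succ]
    push_cast
    rw [mul_div_mul_left _ _ (by positivity)]
  · have h1 : n ≤ 2*k+1 := h.le
    have h2 : ¬ (n+1 ≤ 2*k+1) := by omega
    simp only [if_pos h1, if_neg h2, h, Nat.sub_self]
    simpa using hasDerivAt_const x (1:ℝ)
  · have h1 : ¬ (n ≤ 2*k+1) := by omega
    have h2 : ¬ (n+1 ≤ 2*k+1) := by omega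
    simp only [if_neg h1, if_neg h2]
    exact hasDerivAt_const x 0

lemma Bm_hasDerivAt (m n : ℕ) (x : ℝ) : HasDerivAt (Bm m n) (Bm m (n+1) x) x := by
  unfold Bm
  apply HasDerivAt.sub
  · rcases Nat.even_or_odd n with h | h
    · simp [h, Nat.even_add_one, Nat.not_even_iff_odd, h.add_one]
      exact Real.hasDerivAt_sinh x
    · simp [Nat.not_even_iff_odd.2 h, Nat.even_add_one, Nat.not_even_iff_odd, h]
      exact Real.hasDerivAt_cosh x
  · exact HasDerivAt.fun_sum fun k _ => Tm_hasDerivAt n k x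

lemma Tm_contDiff (n k : ℕ) : ContDiff ℝ ⊤ (Tm n k) := by
  unfold Tm
  by_cases h : n ≤ 2*k+1
  · simp only [if_pos h]
    exact (contDiff_id.pow _).div_const _
  · simp only [if_neg h]
    exact contDiff_const

lemma Bm_contDiff (m n : ℕ) : ContDiff ℝ ⊤ (Bm m n) := by
  unfold Bm
  apply ContDiff.sub
  · rcases Nat.even_or_odd n with h | h
    · simpa [h] using Real.contDiff_sinh (n := ⊤)
    · simpa [Nat.not_even_iff_odd.2 h] using Real.contDiff_cosh (n := ⊤)
  · exact ContDiff.sum fun k _ => Tm_contDiff n k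

lemma Tm_zero (n k : ℕ) : Tm n k 0 = if n = 2*k+1 then 1 else 0 := by
  unfold Tm
  rcases Nat.lt_trichotomy n (2*k+1) with h | h | h
  · rw [if_pos h.le, if_neg (by omega)]
    rw [zero_pow (by omega)]
    simp
  · rw [if_pos h.le, if_pos h, h, Nat.sub_self]
    simp
  · rw [if_neg (by omega), if_neg (by omega)]

lemma Bm_zero (m n : ℕ) (h : n ≤ 2*(m-1)) : Bm m n 0 = 0 := by
  unfold Bm
  simp only [Tm_zero]
  rcases Nat.even_or_odd n with he | ho
  · rw [if_pos he, Finset.sum_eq_zero, Real.sinh_zero, sub_zero]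
    intro k _
    rw [if_neg]
    rcases he with ⟨j, hj⟩
    omega
  · obtain ⟨j, hj⟩ := ho
    have hjm : j ∈ Finset.range (m-1) := Finset.mem_range.2 (by omega)
    rw [if_neg (Nat.not_even_iff_odd.2 ⟨j, hj⟩), Real.cosh_zero]
    have : ∀ k ∈ Finset.range (m-1), (if n = 2*k+1 then (1:ℝ) else 0)
        = if k = j then 1 else 0 := by
      intro k _
      by_cases hk : k = j
      · rw [if_pos hk, if_pos (by omega)]
      · rw [if_neg hk, if_neg (by omega)]
    rw [Finset.sum_congr rfl this, Finset.sum_ite_eq' (Finset.range (m-1)) j (fun _ => (1:ℝ)),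
      if_pos hjm, sub_self]

lemma abs_sign_le (x : ℝ) : |Real.sign x| ≤ 1 := by
  rcases lt_trichotomy x 0 with h | h | h
  · simp [Real.sign_of_neg h]
  · simp [h, Real.sign_zero]
  · simp [Real.sign_of_pos h]

lemma Dm_abs_le (m n : ℕ) (x : ℝ) : ‖Dm m n x‖ ≤ ‖Bm m n x‖ := by
  unfold Dm
  rw [Real.norm_eq_abs, Real.norm_eq_abs, abs_mul, abs_div]
  have h1 : |Real.sign x| / |(2:ℝ)| ≤ 1 := by
    rw [abs_two]
    linarith [abs_sign_le x, abs_nonneg (Real.sign x)]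
  nlinarith [abs_nonneg (Bm m n x)]

lemma Dm_hasDerivAt_ne (m n : ℕ) (x : ℝ) (hx : x ≠ 0) :
    HasDerivAt (Dm m n) (Dm m (n+1) x) x := by
  have key : ∀ c : ℝ, HasDerivAt (fun y => c / 2 * Bm m n y) (Real.sign x / 2 * Bm m (n+1) x) x
      → False → True := fun _ _ _ => trivial
  rcases hx.lt_or_gt with h | h
  · have hev : Dm m n =ᶠ[nhds x] fun y => (-1) / 2 * Bm m n y := by
      filter_upwards [Iio_mem_nhds h] with y hy
      simp [Dm, Real.sign_of_neg hy]
    have hd : HasDerivAt (fun y => (-1:ℝ) / 2 * Bm m n y) ((-1) / 2 * Bm m (n+1) x) x :=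
      (Bm_hasDerivAt m (n) x).const_mul _
    have := hd.congr_of_eventuallyEq hev
    simpa [Dm, Real.sign_of_neg h] using this
  · have hev : Dm m n =ᶠ[nhds x] fun y => (1:ℝ) / 2 * Bm m n y := by
      filter_upwards [Ioi_mem_nhds h] with y hy
      simp [Dm, Real.sign_of_pos hy]
    have hd : HasDerivAt (fun y => (1:ℝ) / 2 * Bm m n y) ((1) / 2 * Bm m (n+1) x) x :=
      (Bm_hasDerivAt m (n) x).const_mul _
    have := hd.congr_of_eventuallyEq hev
    simpa [Dm, Real.sign_of_pos h] using this

lemma Dm_hasDerivAt_zero (m n : ℕ) (h : n + 1 ≤ 2*(m-1)) :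
    HasDerivAt (Dm m n) 0 0 := by
  have hB : HasDerivAt (Bm m n) 0 0 := by
    have := Bm_hasDerivAt m n 0
    rwa [Bm_zero m (n+1) h] at this
  have hBo : (fun x : ℝ => Bm m n x) =o[nhds 0] fun x => x := by
    have := hasDerivAt_iff_isLittleO.mp hB
    simpa [Bm_zero m n (by omega)] using this
  have hO : (fun x : ℝ => Dm m n x) =O[nhds 0] fun x => Bm m n x :=
    Asymptotics.isBigO_of_le _ (fun x => Dm_abs_le m n x)
  have hDo := hO.trans_isLittleO hBo
  rw [hasDerivAt_iff_isLittleO]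
  simpa [Dm, Real.sign_zero] using hDo

lemma Dm_continuous (m n : ℕ) (h : n ≤ 2*(m-1)) : Continuous (Dm m n) := by
  rw [continuous_iff_continuousAt]
  intro x
  by_cases hx : x = 0
  · subst hx
    have h0 : Dm m n 0 = 0 := by simp [Dm, Real.sign_zero]
    rw [ContinuousAt, h0]
    apply squeeze_zero_norm (fun x => Dm_abs_le m n x)
    have := ((Bm_contDiff m n).continuous.tendsto 0).norm
    simpa [Bm_zero m n h] using this
  · exact (Dm_hasDerivAt_ne m n x hx).continuousAt

lemma Dm_contDiff (m : ℕ) : ∀ j n : ℕ, n + j ≤ 2*(m-1) → ContDiff ℝ (j : ℕ∞) (Dm m n) := by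
  intro j
  induction j with
  | zero => intro n h; exact contDiff_zero.mpr (Dm_continuous m n (by omega))
  | succ j ih =>
    intro n h
    have hder : ∀ x, HasDerivAt (Dm m n) (Dm m (n+1) x) x := by
      intro x
      by_cases hx : x = 0
      · subst hx
        have := Dm_hasDerivAt_zero m n (by omega)
        simpa [Dm, Real.sign_zero] using this
      · exact Dm_hasDerivAt_ne m n x hx
    have hcast : (((j+1:ℕ) : ℕ∞) : WithTop ℕ∞) = (((j:ℕ) : ℕ∞) : WithTop ℕ∞) + 1 := by
      norm_cast
    rw [hcast, contDiff_succ_iff_deriv]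
    refine ⟨fun x => (hder x).differentiableAt, by intro hw; exact absurd hw (by exact_mod_cast WithTop.natCast_ne_top j), ?_⟩
    have : deriv (Dm m n) = Dm m (n+1) := funext fun x => (hder x).deriv
    rw [this]
    exact ih (n+1) (by omega)

lemma Gm_eq_Dm (m : ℕ) : Gm m = Dm m 0 := by
  funext x
  simp only [Gm, Dm, Bm, Tm, Even.zero, if_true, Nat.zero_le, Nat.sub_zero, Real.sinh_eq]

lemma Gm_eqOn_pos (m : ℕ) : ∀ x ∈ Ioi (0:ℝ), Gm m x = Bm m 0 x / 2 := by
  intro x hx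
  rw [Gm_eq_Dm]
  simp [Dm, Real.sign_of_pos hx]
  ring

lemma Gm_eqOn_neg (m : ℕ) : ∀ x ∈ Iio (0:ℝ), Gm m x = -(Bm m 0 x) / 2 := by
  intro x hx
  rw [Gm_eq_Dm]
  simp [Dm, Real.sign_of_neg hx]
  ring

lemma iteratedDeriv_Gm_pos (m n : ℕ) : ∀ x ∈ Ioi (0:ℝ),
    iteratedDeriv n (Gm m) x = Bm m n x / 2 := by
  induction n with
  | zero => simpa [iteratedDeriv_zero] using Gm_eqOn_pos m
  | succ n ih =>
    intro x hx
    rw [iteratedDeriv_succ]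
    have hev : iteratedDeriv n (Gm m) =ᶠ[nhds x] fun y => Bm m n y / 2 := by
      filter_upwards [Ioi_mem_nhds hx] with y hy using ih y hy
    rw [hev.deriv_eq]
    exact ((Bm_hasDerivAt m n x).div_const 2).deriv

lemma iteratedDeriv_Gm_neg (m n : ℕ) : ∀ x ∈ Iio (0:ℝ),
    iteratedDeriv n (Gm m) x = -(Bm m n x) / 2 := by
  induction n with
  | zero => simpa [iteratedDeriv_zero] using Gm_eqOn_neg m
  | succ n ih =>
    intro x hx
    rw [iteratedDeriv_succ]
    have hev : iteratedDeriv n (Gm m) =ᶠ[nhds x] fun y => -(Bm m n y) / 2 := by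
      filter_upwards [Iio_mem_nhds hx] with y hy using ih y hy
    rw [hev.deriv_eq]
    have : HasDerivAt (fun y => -(Bm m n y) / 2) (-(Bm m (n+1) x) / 2) x := by
      simpa [neg_div] using ((Bm_hasDerivAt m n x).div_const 2).fun_neg
    exact this.deriv

lemma Bm_eq_sinh (m n : ℕ) (h : 2*(m-1) ≤ n) (he : Even n) (x : ℝ) :
    Bm m n x = Real.sinh x := by
  unfold Bm
  rw [if_pos he, Finset.sum_eq_zero, sub_zero]
  intro k hk
  rw [Finset.mem_range] at hk
  rw [Tm, if_neg (by omega)]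

lemma Bm_eq_cosh (m n : ℕ) (h : 2*(m-1) ≤ n) (ho : ¬ Even n) (x : ℝ) :
    Bm m n x = Real.cosh x := by
  unfold Bm
  rw [if_neg ho, Finset.sum_eq_zero, sub_zero]
  intro k hk
  rw [Finset.mem_range] at hk
  rw [Tm, if_neg (by omega)]

/-- For every `m ≥ 1`: `G_m` is `(2m−2)`-times continuously differentiable on `ℝ`; it is
infinitely differentiable away from `0` and satisfies `G_m^{(2m)} = G_m^{(2m−2)}` there;
and its `(2m−1)`st derivative has a jump of size `1` at the origin.  Thus `G_m` is a
fundamental solution of `d^{2m}/dx^{2m} − d^{2m−2}/dx^{2m−2}`. -/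
theorem Gm_fundamental_solution (m : ℕ) (hm : 1 ≤ m) :
    ContDiff ℝ ((2 * m - 2 : ℕ) : ℕ∞) (Gm m) ∧
    ContDiffOn ℝ ((⊤ : ℕ∞) : ℕ∞) (Gm m) {x : ℝ | x ≠ 0} ∧
    (∀ x : ℝ, x ≠ 0 →
      iteratedDeriv (2 * m) (Gm m) x = iteratedDeriv (2 * m - 2) (Gm m) x) ∧
    (∃ a b : ℝ,
      Filter.Tendsto (iteratedDeriv (2 * m - 1) (Gm m))
        (nhdsWithin 0 (Set.Ioi 0)) (nhds a) ∧
      Filter.Tendsto (iteratedDeriv (2 * m - 1) (Gm m))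
        (nhdsWithin 0 (Set.Iio 0)) (nhds b) ∧
      a - b = 1) := by
  refine ⟨?_, ?_, ?_, ?_⟩
  · rw [Gm_eq_Dm]
    exact Dm_contDiff m (2*m-2) 0 (by omega)
  · intro x hx
    apply ContDiffAt.contDiffWithinAt
    rcases (show x ≠ 0 from hx).lt_or_gt with h | h
    · have hB : ContDiffAt ℝ ((⊤:ℕ∞):ℕ∞) (fun y => -(Bm m 0 y) / 2) x :=
        ((((Bm_contDiff m 0).neg.div_const 2).of_le le_top)).contDiffAt
      apply hB.congr_of_eventuallyEq
      filter_upwards [Iio_mem_nhds h] with y hy using Gm_eqOn_neg m y hy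
    · have hB : ContDiffAt ℝ ((⊤:ℕ∞):ℕ∞) (fun y => Bm m 0 y / 2) x :=
        ((((Bm_contDiff m 0).div_const 2).of_le le_top)).contDiffAt
      apply hB.congr_of_eventuallyEq
      filter_upwards [Ioi_mem_nhds h] with y hy using Gm_eqOn_pos m y hy
  · intro x hx
    have he1 : Even (2*m) := ⟨m, by ring⟩
    have he2 : Even (2*m-2) := ⟨m-1, by omega⟩
    rcases hx.lt_or_gt with h | h
    · rw [iteratedDeriv_Gm_neg m (2*m) x h, iteratedDeriv_Gm_neg m (2*m-2) x h,
        Bm_eq_sinh m (2*m) (by omega) he1, Bm_eq_sinh m (2*m-2) (by omega) he2]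
    · rw [iteratedDeriv_Gm_pos m (2*m) x h, iteratedDeriv_Gm_pos m (2*m-2) x h,
        Bm_eq_sinh m (2*m) (by omega) he1, Bm_eq_sinh m (2*m-2) (by omega) he2]
  · have hodd : ¬ Even (2*m-1) := by
      rw [Nat.not_even_iff_odd]
      exact ⟨m-1, by omega⟩
    have h0 : Bm m (2*m-1) 0 = 1 := by
      rw [Bm_eq_cosh m (2*m-1) (by omega) hodd, Real.cosh_zero]
    refine ⟨1/2, -(1/2), ?_, ?_, by norm_num⟩
    · have hc : Filter.Tendsto (fun x => Bm m (2*m-1) x / 2)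
          (nhdsWithin 0 (Set.Ioi 0)) (nhds (1/2)) := by
        have := (((Bm_contDiff m (2*m-1)).continuous.tendsto 0).div_const 2).mono_left
          (nhdsWithin_le_nhds (s := Set.Ioi (0:ℝ)))
        simpa [h0] using this
      apply hc.congr'
      filter_upwards [eventually_mem_nhdsWithin] with y hy
        using (iteratedDeriv_Gm_pos m (2*m-1) y hy).symm
    · have hc : Filter.Tendsto (fun x => -(Bm m (2*m-1) x) / 2)
          (nhdsWithin 0 (Set.Iio 0)) (nhds (-(1/2))) := by
        have := ((((Bm_contDiff m (2*m-1)).continuous.tendsto 0).neg.div_const 2)).mono_left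
          (nhdsWithin_le_nhds (s := Set.Iio (0:ℝ)))
        simpa [h0, neg_div] using this
      apply hc.congr'
      filter_upwards [eventually_mem_nhdsWithin] with y hy
        using (iteratedDeriv_Gm_neg m (2*m-1) y hy).symm
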